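/- Let S and O be finite nonempty sets和. Let M = (r,p) and M_I = (r,p_I) be two SMDP models over (S,O) with the same reward function r satisfying 0 ≤ r(s,o) ≤ Rmax, with ∑_{s'} p(s,o,s') ≤ γ̄ and ∑_{s'} p_I(s,o,s') ≤ γ̄ for all (s,o) where γ̄ < 1, and with max_{s,o} ∑_{s'} |p(s,o,s') − p_I(s,o,s')| ≤ γ̄ · ζ. Let Q* and Q*_I be Bellman-optimal value functions for M and M_I, let π_I : S → O be greedy with respect to Q*_I, let V^{π_I} be the value of π_I in M, and let V*(s) = max_o Q*(s,o). Then ‖V^{π_I} − V*‖_∞ ≤ 2ζ · γ̄ · Rmax / (1 − γ̄)². -/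
import Mathlib


/-- Maximum of a real-valued function over a finite nonempty type. -/
noncomputable def fmax {α : Type*} [Fintype α] [Nonempty α] (f : α → ℝ) : ℝ :=
  Finset.univ.sup' Finset.univ_nonempty f

lemma fmax_le {α : Type*} [Fintype α] [Nonempty α] {f : α → ℝ} {c : ℝ}
    (h : ∀ a, f a ≤ c) : fmax f ≤ c :=
  Finset.sup'_le _ _ (fun a _ => h a)

lemma le_fmax {α : Type*} [Fintype α] [Nonempty α] (f : α → ℝ) (a : α) :
    f a ≤ fmax f :=
  Finset.le_sup' f (Finset.mem_univ a)

lemma abs_fmax_sub_fmax_le {α : Type*} [Fintype α] [Nonempty α] (f g : α → ℝ) :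
    |fmax f - fmax g| ≤ fmax (fun a => |f a - g a|) := by
  rw [abs_sub_le_iff]
  constructor
  · have : fmax f ≤ fmax g + fmax (fun a => |f a - g a|) := by
      apply fmax_le; intro a
      have h1 : f a - g a ≤ |f a - g a| := le_abs_self _
      have h2 : g a ≤ fmax g := le_fmax g a
      have h3 : |f a - g a| ≤ fmax (fun a => |f a - g a|) :=
        le_fmax (fun a => |f a - g a|) a
      linarith
    linarith
  · have : fmax g ≤ fmax f + fmax (fun a => |f a - g a|) := by
      apply fmax_le; intro a
      have h1 : g a - f a ≤ |f a - g a| := by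
        rw [abs_sub_comm]; exact le_abs_self _
      have h2 : f a ≤ fmax f := le_fmax f a
      have h3 : |f a - g a| ≤ fmax (fun a => |f a - g a|) :=
        le_fmax (fun a => |f a - g a|) a
      linarith
    linarith

/-- Corollary 1 (multi-time-model-of-intent value loss): with known rewards and
discounted total-variation error at most `γ̄ · ζ`, the value loss is at most
`2 ζ γ̄ Rmax / (1 - γ̄)²`. -/
theorem mtm_value_loss_bound {S O : Type*} [Fintype S] [Fintype O] [Nonempty S] [Nonempty O]
    (r : S → O → ℝ) (p pI : S → O → S → ℝ) (Rmax γbar ζ : ℝ)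
    (hr0 : ∀ s o, 0 ≤ r s o) (hrR : ∀ s o, r s o ≤ Rmax)
    (hp : ∀ s o s', 0 ≤ p s o s') (hpI : ∀ s o s', 0 ≤ pI s o s')
    (hγp : ∀ s o, ∑ s' : S, p s o s' ≤ γbar)
    (hγpI : ∀ s o, ∑ s' : S, pI s o s' ≤ γbar)
    (hγlt : γbar < 1)
    (hζ : fmax (fun so : S × O => ∑ s' : S, |p so.1 so.2 s' - pI so.1 so.2 s'|) ≤ γbar * ζ)
    (Qstar QI : S → O → ℝ)
    (hQstar : ∀ s o, Qstar s o = r s o + ∑ s' : S, p s o s' * fmax (fun o' => Qstar s' o'))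
    (hQI : ∀ s o, QI s o = r s o + ∑ s' : S, pI s o s' * fmax (fun o' => QI s' o'))
    (πI : S → O)
    (hgreedy : ∀ s, QI s (πI s) = fmax (fun o => QI s o))
    (VπI : S → ℝ)
    (hVπI : ∀ s, VπI s = r s (πI s) + ∑ s' : S, p s (πI s) s' * VπI s')
    (Vstar : S → ℝ)
    (hVstar : ∀ s, Vstar s = fmax (fun o => Qstar s o)) :
    fmax (fun s : S => |VπI s - Vstar s|) ≤
      2 * ζ * γbar * Rmax / (1 - γbar) ^ 2 := by
  obtain ⟨s₀⟩ := (inferInstance : Nonempty S)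
  obtain ⟨o₀⟩ := (inferInstance : Nonempty O)
  have hγ0 : 0 ≤ γbar :=
    le_trans (Finset.sum_nonneg (fun s' _ => hp s₀ o₀ s')) (hγp s₀ o₀)
  have h1γ : 0 < 1 - γbar := by linarith
  have hR0 : 0 ≤ Rmax := le_trans (hr0 s₀ o₀) (hrR s₀ o₀)
  have hζ' : ∀ s o, (∑ s' : S, |p s o s' - pI s o s'|) ≤ γbar * ζ := fun s o =>
    le_trans (le_fmax (fun so : S × O => ∑ s' : S, |p so.1 so.2 s' - pI so.1 so.2 s'|) (s, o)) hζ
  have hγζ0 : 0 ≤ γbar * ζ :=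
    le_trans (Finset.sum_nonneg (fun s' _ => abs_nonneg _)) (hζ' s₀ o₀)
  set VI : S → ℝ := fun s => fmax (fun o => QI s o) with hVIdef
  have hQI' : ∀ s o, QI s o = r s o + ∑ s' : S, pI s o s' * VI s' := hQI
  have hQstar' : ∀ s o, Qstar s o = r s o + ∑ s' : S, p s o s' * Vstar s' := by
    intro s o
    rw [hQstar s o]
    congr 1
    exact Finset.sum_congr rfl (fun s' _ => by rw [← hVstar s'])
  -- bound on QI
  set K : ℝ := fmax (fun so : S × O => |QI so.1 so.2|) with hKdef
  have hK0 : 0 ≤ K :=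
    le_trans (abs_nonneg _) (le_fmax (fun so : S × O => |QI so.1 so.2|) (s₀, o₀))
  have hVIK : ∀ s, |VI s| ≤ K := by
    intro s
    rw [abs_le]
    constructor
    · have h1 : -|QI s o₀| ≤ QI s o₀ := neg_abs_le _
      have h2 : |QI s o₀| ≤ K := le_fmax (fun so : S × O => |QI so.1 so.2|) (s, o₀)
      have h3 : QI s o₀ ≤ VI s := le_fmax (fun o => QI s o) o₀
      linarith
    · apply fmax_le; intro o
      exact le_trans (le_abs_self _) (le_fmax (fun so : S × O => |QI so.1 so.2|) (s, o))
  have hKrec : K ≤ Rmax + γbar * K := by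
    apply fmax_le
    rintro ⟨s, o⟩
    simp only
    rw [hQI' s o]
    calc |r s o + ∑ s' : S, pI s o s' * VI s'|
        ≤ |r s o| + |∑ s' : S, pI s o s' * VI s'| := abs_add_le _ _
      _ ≤ Rmax + γbar * K := by
          apply add_le_add
          · rw [abs_of_nonneg (hr0 s o)]; exact hrR s o
          · calc |∑ s' : S, pI s o s' * VI s'|
                ≤ ∑ s' : S, |pI s o s' * VI s'| := Finset.abs_sum_le_sum_abs _ _
              _ ≤ ∑ s' : S, pI s o s' * K := by
                  apply Finset.sum_le_sum; intro s' _
                  rw [abs_mul, abs_of_nonneg (hpI s o s')]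
                  exact mul_le_mul_of_nonneg_left (hVIK s') (hpI s o s')
              _ = (∑ s' : S, pI s o s') * K := by rw [Finset.sum_mul]
              _ ≤ γbar * K := mul_le_mul_of_nonneg_right (hγpI s o) hK0
  set B : ℝ := Rmax / (1 - γbar) with hBdef
  have hKB : K ≤ B := by
    rw [hBdef, le_div_iff₀ h1γ]; nlinarith
  have hVIB : ∀ s, |VI s| ≤ B := fun s => le_trans (hVIK s) hKB
  have hB0 : 0 ≤ B := le_trans hK0 hKB
  -- generic one-step error bound
  have key : ∀ (q qI' X : S → ℝ) (D : ℝ), (∀ s', 0 ≤ q s') →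
      (∑ s' : S, q s') ≤ γbar → (∑ s' : S, |q s' - qI' s'|) ≤ γbar * ζ →
      0 ≤ D → (∀ s', |X s' - VI s'| ≤ D) →
      |(∑ s' : S, q s' * X s') - (∑ s' : S, qI' s' * VI s')| ≤ γbar * D + γbar * ζ * B := by
    intro q qI' X D hq hqγ htv hD hX
    have hrw : (∑ s' : S, q s' * X s') - (∑ s' : S, qI' s' * VI s')
        = ∑ s' : S, (q s' * (X s' - VI s') + (q s' - qI' s') * VI s') := by
      rw [← Finset.sum_sub_distrib]
      exact Finset.sum_congr rfl (fun s' _ => by ring)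
    rw [hrw]
    calc |∑ s' : S, (q s' * (X s' - VI s') + (q s' - qI' s') * VI s')|
        ≤ ∑ s' : S, |q s' * (X s' - VI s') + (q s' - qI' s') * VI s'| :=
          Finset.abs_sum_le_sum_abs _ _
      _ ≤ ∑ s' : S, (q s' * D + |q s' - qI' s'| * B) := by
          apply Finset.sum_le_sum; intro s' _
          calc |q s' * (X s' - VI s') + (q s' - qI' s') * VI s'|
              ≤ |q s' * (X s' - VI s')| + |(q s' - qI' s') * VI s'| := abs_add_le _ _
            _ ≤ q s' * D + |q s' - qI' s'| * B := by
                apply add_le_add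
                · rw [abs_mul, abs_of_nonneg (hq s')]
                  exact mul_le_mul_of_nonneg_left (hX s') (hq s')
                · rw [abs_mul]
                  exact mul_le_mul_of_nonneg_left (hVIB s') (abs_nonneg _)
      _ = (∑ s' : S, q s') * D + (∑ s' : S, |q s' - qI' s'|) * B := by
          rw [Finset.sum_add_distrib, Finset.sum_mul, Finset.sum_mul]
      _ ≤ γbar * D + γbar * ζ * B := by
          apply add_le_add
          · exact mul_le_mul_of_nonneg_right hqγ hD
          · exact mul_le_mul_of_nonneg_right htv hB0
  -- Δ1
  set Δ1 : ℝ := fmax (fun s => |Vstar s - VI s|) with hΔ1def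
  have hΔ10 : 0 ≤ Δ1 := by
    rw [hΔ1def]
    exact le_trans (abs_nonneg _) (le_fmax (fun s => |Vstar s - VI s|) s₀)
  have hΔ1rec : Δ1 ≤ γbar * Δ1 + γbar * ζ * B := by
    apply fmax_le; intro s
    rw [hVstar s]
    calc |fmax (fun o => Qstar s o) - VI s|
        ≤ fmax (fun o => |Qstar s o - QI s o|) := abs_fmax_sub_fmax_le _ _
      _ ≤ γbar * Δ1 + γbar * ζ * B := by
          apply fmax_le; intro o
          rw [hQstar' s o, hQI' s o]
          have h := key (p s o) (pI s o) Vstar Δ1 (hp s o) (hγp s o) (hζ' s o) hΔ10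
            (fun s' => le_fmax (fun s => |Vstar s - VI s|) s')
          calc |r s o + (∑ s' : S, p s o s' * Vstar s') -
                (r s o + ∑ s' : S, pI s o s' * VI s')|
              = |(∑ s' : S, p s o s' * Vstar s') - (∑ s' : S, pI s o s' * VI s')| := by
                congr 1; ring
            _ ≤ γbar * Δ1 + γbar * ζ * B := h
  -- Δ2
  have hVIeq : ∀ s, VI s = r s (πI s) + ∑ s' : S, pI s (πI s) s' * VI s' := by
    intro s
    have : VI s = QI s (πI s) := (hgreedy s).symm
    rw [this, hQI' s (πI s)]
  set Δ2 : ℝ := fmax (fun s => |VπI s - VI s|) with hΔ2def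
  have hΔ20 : 0 ≤ Δ2 := by
    rw [hΔ2def]
    exact le_trans (abs_nonneg _) (le_fmax (fun s => |VπI s - VI s|) s₀)
  have hΔ2rec : Δ2 ≤ γbar * Δ2 + γbar * ζ * B := by
    apply fmax_le; intro s
    rw [hVπI s, hVIeq s]
    have h := key (p s (πI s)) (pI s (πI s)) VπI Δ2 (hp s (πI s)) (hγp s (πI s))
      (hζ' s (πI s)) hΔ20 (fun s' => le_fmax (fun s => |VπI s - VI s|) s')
    calc |r s (πI s) + (∑ s' : S, p s (πI s) s' * VπI s') -
          (r s (πI s) + ∑ s' : S, pI s (πI s) s' * VI s')|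
        = |(∑ s' : S, p s (πI s) s' * VπI s') - (∑ s' : S, pI s (πI s) s' * VI s')| := by
          congr 1; ring
      _ ≤ γbar * Δ2 + γbar * ζ * B := h
  -- combine
  have hfin : fmax (fun s : S => |VπI s - Vstar s|) ≤ Δ2 + Δ1 := by
    apply fmax_le; intro s
    calc |VπI s - Vstar s| ≤ |VπI s - VI s| + |VI s - Vstar s| := abs_sub_le _ _ _
      _ ≤ Δ2 + Δ1 := by
          apply add_le_add (le_fmax (fun s => |VπI s - VI s|) s)
          rw [abs_sub_comm]
          exact le_fmax (fun s => |Vstar s - VI s|) s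
  have hB' : B * (1 - γbar) = Rmax := div_mul_cancel₀ _ h1γ.ne'
  have hgoal : Δ2 + Δ1 ≤ 2 * ζ * γbar * Rmax / (1 - γbar) ^ 2 := by
    rw [le_div_iff₀ (by positivity)]
    have h1 : (1 - γbar) * Δ1 ≤ γbar * ζ * B := by linarith
    have h2 : (1 - γbar) * Δ2 ≤ γbar * ζ * B := by linarith
    nlinarith [mul_le_mul_of_nonneg_right h1 h1γ.le, mul_le_mul_of_nonneg_right h2 h1γ.le]
  exact le_trans hfin hgoal
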